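/- Let $x \in M_N(\mathbb{C})$ and $k \geq 1$, and suppose $(J, I)$ is the lexicographically first pair in $\binom{[N]}{k} \times \binom{[N]}{k}$ (ordered first by $J$ then by $I$, each with the lexicographic order on $k$-subsets) such that the minor $x_{I,J} \neq 0$. Then for every upper triangular matrix $t$ with all diagonal entries equal to $1$, the pair $(J, I)$ is also the lexicographically first pair with $(t^* x t)_{I,J} \neq 0$, and moreover $(t^* x t)_{I,J} = x_{I,J}$. -/

import Mathlib

open Matrix

/-- The minor of `X` with rows `A` and columns `B` (increasing order); junk `0` if cards differ. -/
noncomputable def minorC {N : ℕ} (X : Matrix (Fin N) (Fin N) ℂ) (A B : Finset (Fin N)) : ℂ :=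
  if h : B.card = A.card then
    Matrix.det (Matrix.of fun (a b : Fin A.card) =>
      X (A.orderEmbOfFin rfl a) (B.orderEmbOfFin h b))
  else 0

/-- Lexicographic order on subsets: `A < B` iff for some position `p`,
`a_q ≤ b_q` for `q < p` and `a_p < b_p`. -/
def finsetLexLt {N : ℕ} (A B : Finset (Fin N)) : Prop :=
  ∃ h : A.card = B.card, ∃ p : Fin A.card,
    (∀ q : Fin A.card, q < p → A.orderEmbOfFin rfl q ≤ B.orderEmbOfFin h.symm q) ∧
    A.orderEmbOfFin rfl p < B.orderEmbOfFin h.symm p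

/-- Lexicographic order on pairs `(J, I)`: compare `J` first, then `I`. -/
def pairLexLt {N : ℕ} (J' I' J I : Finset (Fin N)) : Prop :=
  finsetLexLt J' J ∨ (J' = J ∧ finsetLexLt I' I)

lemma embCast {N : ℕ} (s : Finset (Fin N)) {a b : ℕ} (ha : s.card = a) (hb : s.card = b)
    (i : Fin a) (j : Fin b) (hij : (i : ℕ) = (j : ℕ)) :
    s.orderEmbOfFin ha i = s.orderEmbOfFin hb j :=
  Finset.orderEmbOfFin_eq_orderEmbOfFin_iff.mpr hij

lemma minorC_eq {N k : ℕ} (X : Matrix (Fin N) (Fin N) ℂ) {A B : Finset (Fin N)}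
    (hA : A.card = k) (hB : B.card = k) :
    minorC X A B = Matrix.det (Matrix.of fun (a b : Fin k) =>
      X (A.orderEmbOfFin hA a) (B.orderEmbOfFin hB b)) := by
  rw [minorC, dif_pos (hB.trans hA.symm)]
  conv_rhs => rw [← Matrix.det_submatrix_equiv_self (finCongr hA)]
  congr 1

lemma finsetLexLt_iff {N k : ℕ} {A B : Finset (Fin N)} (hA : A.card = k) (hB : B.card = k) :
    finsetLexLt A B ↔ ∃ p : Fin k,
      (∀ q : Fin k, q < p → A.orderEmbOfFin hA q ≤ B.orderEmbOfFin hB q) ∧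
      A.orderEmbOfFin hA p < B.orderEmbOfFin hB p := by
  constructor
  · rintro ⟨h, p, h1, h2⟩
    refine ⟨⟨p, by omega⟩, fun q hq => ?_, ?_⟩
    · have hq' : (q : ℕ) < A.card := by omega
      rw [← embCast A rfl hA ⟨q, hq'⟩ q rfl, ← embCast B h.symm hB ⟨q, hq'⟩ q rfl]
      exact h1 ⟨q, hq'⟩ (by simpa [Fin.lt_def] using hq)
    · rw [← embCast A rfl hA p ⟨p, by omega⟩ rfl, ← embCast B h.symm hB p ⟨p, by omega⟩ rfl]
      exact h2
  · rintro ⟨p, h1, h2⟩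
    refine ⟨hA.trans hB.symm, ⟨p, by omega⟩, fun q hq => ?_, ?_⟩
    · have hq' : (q : ℕ) < k := by omega
      rw [embCast A rfl hA q ⟨q, hq'⟩ rfl,
        embCast B (hA.trans hB.symm).symm hB q ⟨q, hq'⟩ rfl]
      exact h1 ⟨q, hq'⟩ (by simpa [Fin.lt_def] using hq)
    · rw [embCast A rfl hA _ p (by simp),
        embCast B (hA.trans hB.symm).symm hB _ p (by simp)]
      exact h2

lemma lex_of_le_ne {N k : ℕ} {A B : Finset (Fin N)} (hA : A.card = k) (hB : B.card = k)
    (hle : ∀ q : Fin k, A.orderEmbOfFin hA q ≤ B.orderEmbOfFin hB q) (hne : A ≠ B) :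
    finsetLexLt A B := by
  have hex : ∃ p : Fin k, A.orderEmbOfFin hA p ≠ B.orderEmbOfFin hB p := by
    by_contra hc
    push_neg at hc
    apply hne
    apply Finset.coe_injective
    rw [← Finset.range_orderEmbOfFin A hA, ← Finset.range_orderEmbOfFin B hB]
    exact congrArg Set.range (funext hc)
  obtain ⟨p, hp⟩ := hex
  exact (finsetLexLt_iff hA hB).mpr ⟨p, fun q _ => hle q, lt_of_le_of_ne (hle p) hp⟩

lemma lex_trans_of_le {N k : ℕ} {A B C : Finset (Fin N)} (hA : A.card = k) (hB : B.card = k)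
    (hC : C.card = k)
    (hle : ∀ q : Fin k, A.orderEmbOfFin hA q ≤ B.orderEmbOfFin hB q)
    (h : finsetLexLt B C) : finsetLexLt A C := by
  obtain ⟨p, h1, h2⟩ := (finsetLexLt_iff hB hC).mp h
  exact (finsetLexLt_iff hA hC).mpr
    ⟨p, fun q hq => le_trans (hle q) (h1 q hq), lt_of_le_of_lt (hle p) h2⟩

lemma sorted_dom {N k : ℕ} (f : Fin k → Fin N) (hf : Function.Injective f)
    (e : Fin k ↪o Fin N) (hle : ∀ i, f i ≤ e i)
    (hK : (Finset.image f Finset.univ).card = k) (q : Fin k) :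
    (Finset.image f Finset.univ).orderEmbOfFin hK q ≤ e q := by
  set K := Finset.image f Finset.univ with hKdef
  by_contra hcon
  push_neg at hcon
  have hS : (Finset.Iic q).image f ⊆ (Finset.Iio q).image (K.orderEmbOfFin hK) := by
    intro y hy
    obtain ⟨j, hj, rfl⟩ := Finset.mem_image.mp hy
    have hyK : f j ∈ K := Finset.mem_image.mpr ⟨j, Finset.mem_univ j, rfl⟩
    have hmem : f j ∈ Set.range (K.orderEmbOfFin hK) := by
      rw [Finset.range_orderEmbOfFin]; exact hyK
    obtain ⟨r, hr⟩ := hmem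
    have hlt : K.orderEmbOfFin hK r < K.orderEmbOfFin hK q := by
      rw [hr]
      exact lt_of_le_of_lt (le_trans (hle j) (e.monotone (Finset.mem_Iic.mp hj))) hcon
    have hrq : r < q := (K.orderEmbOfFin hK).strictMono.lt_iff_lt.mp hlt
    exact Finset.mem_image.mpr ⟨r, Finset.mem_Iio.mpr hrq, hr⟩
  have h1 : ((Finset.Iic q).image f).card = (q : ℕ) + 1 := by
    rw [Finset.card_image_of_injective _ hf, Fin.card_Iic]
  have h2 : ((Finset.Iio q).image (K.orderEmbOfFin hK)).card ≤ (q : ℕ) :=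
    le_trans Finset.card_image_le (le_of_eq (Fin.card_Iio q))
  have := Finset.card_le_card hS
  omega

lemma eq_orderEmb_of_le {N k : ℕ} {A : Finset (Fin N)} (hA : A.card = k) (f : Fin k → Fin N)
    (hf : Function.Injective f) (himg : Finset.image f Finset.univ = A)
    (hle : ∀ i, f i ≤ A.orderEmbOfFin hA i) : f = ⇑(A.orderEmbOfFin hA) := by
  have hinj : Function.Injective ⇑(A.orderEmbOfFin hA) := (A.orderEmbOfFin hA).injective
  have himg' : Finset.image (⇑(A.orderEmbOfFin hA)) Finset.univ = A := by
    apply Finset.coe_injective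
    rw [Finset.coe_image, Finset.coe_univ, Set.image_univ, Finset.range_orderEmbOfFin]
  have hsum : ∑ i : Fin k, ((f i : ℕ)) = ∑ i : Fin k, ((A.orderEmbOfFin hA i : ℕ)) := by
    have e1 : ∑ a ∈ A, (a : ℕ) = ∑ i : Fin k, ((f i : ℕ)) := by
      rw [← himg]
      exact Finset.sum_image (fun x _ y _ h => hf h)
    have e2 : ∑ a ∈ A, (a : ℕ) = ∑ i : Fin k, ((A.orderEmbOfFin hA i : ℕ)) := by
      conv_lhs => rw [← himg']
      exact Finset.sum_image (fun x _ y _ h => hinj h)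
    omega
  have hpt := (Finset.sum_eq_sum_iff_of_le (fun i _ => (show (f i : ℕ) ≤ (A.orderEmbOfFin hA i : ℕ) from hle i))).mp hsum
  funext i
  exact Fin.ext (hpt i (Finset.mem_univ i))

lemma det_eq_sign_mul_minor {N k : ℕ} (x : Matrix (Fin N) (Fin N) ℂ) (f g : Fin k → Fin N)
    (hf : Function.Injective f) (hg : Function.Injective g) :
    ∃ c : ℂ, Matrix.det (Matrix.of fun i j => x (f i) (g j)) =
      c * minorC x (Finset.image f Finset.univ) (Finset.image g Finset.univ) := by
  set K := Finset.image f Finset.univ with hKdef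
  set L := Finset.image g Finset.univ with hLdef
  have hK : K.card = k := by
    rw [hKdef, Finset.card_image_of_injective _ hf, Finset.card_univ, Fintype.card_fin]
  have hL : L.card = k := by
    rw [hLdef, Finset.card_image_of_injective _ hg, Finset.card_univ, Fintype.card_fin]
  have hmemf : ∀ i, f i ∈ K := fun i => Finset.mem_image.mpr ⟨i, Finset.mem_univ i, rfl⟩
  have hmemg : ∀ j, g j ∈ L := fun j => Finset.mem_image.mpr ⟨j, Finset.mem_univ j, rfl⟩
  set uf : Fin k → Fin k := fun i => (K.orderIsoOfFin hK).symm ⟨f i, hmemf i⟩ with huf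
  set ug : Fin k → Fin k := fun j => (L.orderIsoOfFin hL).symm ⟨g j, hmemg j⟩ with hug
  have hufe : ∀ i, K.orderEmbOfFin hK (uf i) = f i := by
    intro i
    rw [← Finset.coe_orderIsoOfFin_apply, huf, OrderIso.apply_symm_apply]
  have huge : ∀ j, L.orderEmbOfFin hL (ug j) = g j := by
    intro j
    rw [← Finset.coe_orderIsoOfFin_apply, hug, OrderIso.apply_symm_apply]
  have hufinj : Function.Injective uf := fun a b h => hf (by rw [← hufe a, ← hufe b, h])
  have huginj : Function.Injective ug := fun a b h => hg (by rw [← huge a, ← huge b, h])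
  set σ : Equiv.Perm (Fin k) := Equiv.ofBijective uf (Finite.injective_iff_bijective.mp hufinj)
    with hσ
  set τ : Equiv.Perm (Fin k) := Equiv.ofBijective ug (Finite.injective_iff_bijective.mp huginj)
    with hτ
  set M : Matrix (Fin k) (Fin k) ℂ :=
    Matrix.of fun i j => x (K.orderEmbOfFin hK i) (L.orderEmbOfFin hL j) with hM
  have hsub : (Matrix.of fun i j => x (f i) (g j)) = (M.submatrix σ id).submatrix id τ := by
    ext i j
    simp only [Matrix.submatrix_apply, Matrix.of_apply, id_eq, hM]
    rw [show σ i = uf i from rfl, show τ j = ug j from rfl, hufe, huge]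
  refine ⟨((Equiv.Perm.sign τ : ℤ) : ℂ) * ((Equiv.Perm.sign σ : ℤ) : ℂ), ?_⟩
  rw [hsub, Matrix.det_permute', Matrix.det_permute, minorC_eq x hK hL, ← hM]
  ring

lemma det_mul_expand_left {N k : ℕ} (A B : Matrix (Fin N) (Fin N) ℂ) (r c : Fin k → Fin N) :
    Matrix.det (Matrix.of fun i j => (A * B) (r i) (c j)) =
      ∑ f : Fin k → Fin N, (∏ i, A (r i) (f i)) *
        Matrix.det (Matrix.of fun i j => B (f i) (c j)) := by
  have h1 : (Matrix.of fun i j => (A * B) (r i) (c j)) =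
      fun i => ∑ l : Fin N, A (r i) l • fun j => B l (c j) := by
    funext i j
    simp [Matrix.mul_apply, Finset.sum_apply]
  show Matrix.detRowAlternating (Matrix.of fun i j => (A * B) (r i) (c j)) = _
  rw [h1, ← AlternatingMap.coe_multilinearMap,
    (Matrix.detRowAlternating (R := ℂ) (n := Fin k)).toMultilinearMap.map_sum]
  apply Finset.sum_congr rfl
  intro f _
  rw [(Matrix.detRowAlternating (R := ℂ) (n := Fin k)).toMultilinearMap.map_smul_univ
    (fun i => A (r i) (f i)) (fun i => fun j => B (f i) (c j))]
  simp only [smul_eq_mul]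
  rfl

lemma det_mul_expand_right {N k : ℕ} (A B : Matrix (Fin N) (Fin N) ℂ) (r c : Fin k → Fin N) :
    Matrix.det (Matrix.of fun i j => (A * B) (r i) (c j)) =
      ∑ g : Fin k → Fin N, (∏ j, B (g j) (c j)) *
        Matrix.det (Matrix.of fun i j => A (r i) (g j)) := by
  have h0 : (Matrix.of fun i j => (A * B) (r i) (c j)) =
      (Matrix.of fun i j => (Bᵀ * Aᵀ) (c i) (r j))ᵀ := by
    ext i j
    simp [Matrix.mul_apply, Matrix.transpose_apply]
    rw [Finset.sum_congr rfl (fun l _ => mul_comm (B l (c j)) (A (r i) l))]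
  rw [h0, Matrix.det_transpose, det_mul_expand_left Bᵀ Aᵀ c r]
  apply Finset.sum_congr rfl
  intro g _
  congr 1
  rw [← Matrix.det_transpose (Matrix.of fun i j => A (r i) (g j))]
  congr 1

theorem stmt6 (N k : ℕ) (x : Matrix (Fin N) (Fin N) ℂ)
    (I J : Finset (Fin N)) (hI : I.card = k) (hJ : J.card = k)
    (hne : minorC x I J ≠ 0)
    (hfirst : ∀ I' J' : Finset (Fin N), I'.card = k → J'.card = k →
      pairLexLt J' I' J I → minorC x I' J' = 0)
    (t : Matrix (Fin N) (Fin N) ℂ)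
    (htriang : t.BlockTriangular id) (hdiag : ∀ i, t i i = 1) :
    (∀ I' J' : Finset (Fin N), I'.card = k → J'.card = k →
      pairLexLt J' I' J I → minorC (tᴴ * x * t) I' J' = 0) ∧
    minorC (tᴴ * x * t) I J = minorC x I J ∧
    minorC (tᴴ * x * t) I J ≠ 0 := by
  have expand : ∀ (I' J' : Finset (Fin N)) (hI' : I'.card = k) (hJ' : J'.card = k),
      minorC (tᴴ * x * t) I' J' = ∑ f : Fin k → Fin N, ∑ g : Fin k → Fin N,
        (∏ i, tᴴ (I'.orderEmbOfFin hI' i) (f i)) *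
          ((∏ j, t (g j) (J'.orderEmbOfFin hJ' j)) *
            Matrix.det (Matrix.of fun i j => x (f i) (g j))) := by
    intro I' J' hI' hJ'
    rw [minorC_eq (tᴴ * x * t) hI' hJ']
    have hassoc : tᴴ * x * t = tᴴ * (x * t) := by rw [mul_assoc]
    rw [hassoc, det_mul_expand_left tᴴ (x * t) (I'.orderEmbOfFin hI') (J'.orderEmbOfFin hJ')]
    apply Finset.sum_congr rfl
    intro f _
    rw [det_mul_expand_right x t f (J'.orderEmbOfFin hJ'), Finset.mul_sum]
  have key : ∀ (I' J' : Finset (Fin N)) (hI' : I'.card = k) (hJ' : J'.card = k)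
      (f g : Fin k → Fin N),
      (pairLexLt J' I' J I ∨
        (I' = I ∧ J' = J ∧ ¬(f = ⇑(I.orderEmbOfFin hI) ∧ g = ⇑(J.orderEmbOfFin hJ)))) →
      (∏ i, tᴴ (I'.orderEmbOfFin hI' i) (f i)) *
        ((∏ j, t (g j) (J'.orderEmbOfFin hJ' j)) *
          Matrix.det (Matrix.of fun i j => x (f i) (g j))) = 0 := by
    intro I' J' hI' hJ' f g hcase
    by_contra h0
    have hPf : (∏ i, tᴴ (I'.orderEmbOfFin hI' i) (f i)) ≠ 0 := fun h => h0 (by rw [h, zero_mul])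
    have hPg : (∏ j, t (g j) (J'.orderEmbOfFin hJ' j)) ≠ 0 := fun h => h0 (by rw [h]; ring)
    have hD : Matrix.det (Matrix.of fun i j => x (f i) (g j)) ≠ 0 :=
      fun h => h0 (by rw [h]; ring)
    have hfinj : Function.Injective f := by
      intro a b hab
      by_contra hne'
      exact hD (Matrix.det_zero_of_row_eq hne' (by funext j; simp [hab]))
    have hginj : Function.Injective g := by
      intro a b hab
      by_contra hne'
      exact hD (Matrix.det_zero_of_column_eq hne' (fun i => by simp [hab]))
    have hfle : ∀ i, f i ≤ I'.orderEmbOfFin hI' i := by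
      intro i
      by_contra hc
      push_neg at hc
      have hz : tᴴ (I'.orderEmbOfFin hI' i) (f i) = 0 := by
        rw [Matrix.conjTranspose_apply, htriang hc, star_zero]
      exact (Finset.prod_ne_zero_iff.mp hPf i (Finset.mem_univ i)) hz
    have hgle : ∀ j, g j ≤ J'.orderEmbOfFin hJ' j := by
      intro j
      by_contra hc
      push_neg at hc
      exact (Finset.prod_ne_zero_iff.mp hPg j (Finset.mem_univ j)) (htriang hc)
    set K := Finset.image f Finset.univ with hKdef
    set L := Finset.image g Finset.univ with hLdef
    have hK : K.card = k := by
      rw [hKdef, Finset.card_image_of_injective _ hfinj, Finset.card_univ, Fintype.card_fin]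
    have hL : L.card = k := by
      rw [hLdef, Finset.card_image_of_injective _ hginj, Finset.card_univ, Fintype.card_fin]
    obtain ⟨c, hc⟩ := det_eq_sign_mul_minor x f g hfinj hginj
    have hminor : minorC x K L ≠ 0 := by
      intro h
      rw [← hKdef, ← hLdef] at hc
      exact hD (by rw [hc, h, mul_zero])
    have domK : ∀ q, K.orderEmbOfFin hK q ≤ I'.orderEmbOfFin hI' q :=
      sorted_dom f hfinj (I'.orderEmbOfFin hI') hfle hK
    have domL : ∀ q, L.orderEmbOfFin hL q ≤ J'.orderEmbOfFin hJ' q :=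
      sorted_dom g hginj (J'.orderEmbOfFin hJ') hgle hL
    have contra : pairLexLt L K J I → False := fun hp => hminor (hfirst K L hK hL hp)
    rcases hcase with hp | ⟨hI'I, hJ'J, hne'⟩
    · rcases hp with hJJ | ⟨hJ'J, hII⟩
      · exact contra (Or.inl (lex_trans_of_le hL hJ' hJ domL hJJ))
      · subst hJ'J
        by_cases hLJ : L = J'
        · exact contra (Or.inr ⟨hLJ, lex_trans_of_le hK hI' hI domK hII⟩)
        · exact contra (Or.inl (lex_of_le_ne hL hJ' domL hLJ))
    · subst hI'I; subst hJ'J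
      by_cases hLJ : L = J'
      · by_cases hKI : K = I'
        · exact hne' ⟨eq_orderEmb_of_le hI f hfinj (by rw [← hKdef]; exact hKI)
              (fun i => hfle i),
            eq_orderEmb_of_le hJ g hginj (by rw [← hLdef]; exact hLJ) (fun j => hgle j)⟩
        · exact contra (Or.inr ⟨hLJ, lex_of_le_ne hK hI domK hKI⟩)
      · exact contra (Or.inl (lex_of_le_ne hL hJ domL hLJ))

  have part2 : minorC (tᴴ * x * t) I J = minorC x I J := by
    rw [expand I J hI hJ]
    rw [Fintype.sum_eq_single (⇑(I.orderEmbOfFin hI)) (fun f hf =>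
      Finset.sum_eq_zero (fun g _ =>
        key I J hI hJ f g (Or.inr ⟨rfl, rfl, fun hfg => hf hfg.1⟩)))]
    rw [Fintype.sum_eq_single (⇑(J.orderEmbOfFin hJ)) (fun g hg =>
      key I J hI hJ _ g (Or.inr ⟨rfl, rfl, fun hfg => hg hfg.2⟩))]
    have e1 : (∏ i, tᴴ (I.orderEmbOfFin hI i) (I.orderEmbOfFin hI i)) = 1 := by
      apply Finset.prod_eq_one
      intro i _
      rw [Matrix.conjTranspose_apply, hdiag, star_one]
    have e2 : (∏ j, t (J.orderEmbOfFin hJ j) (J.orderEmbOfFin hJ j)) = 1 := by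
      apply Finset.prod_eq_one
      intro j _
      exact hdiag _
    rw [e1, e2, one_mul, one_mul, ← minorC_eq x hI hJ]
  refine ⟨?_, part2, by rw [part2]; exact hne⟩
  intro I' J' hI' hJ' hp
  rw [expand I' J' hI' hJ']
  exact Finset.sum_eq_zero (fun f _ => Finset.sum_eq_zero (fun g _ =>
    key I' J' hI' hJ' f g (Or.inl hp)))
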